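/- Let Y be a Markov chain on a topological space X, recurrent starting under a σ-finite invariant Borel measure μ, and let A be a Borel set with P_{μ|_{A^c}}(Y_1 ∈ A) > 0. Then the measure μ_{A^c}^{exit}(dx) := P_x(Y_1 ∈ A) μ(dx) on A^c is invariant for the exit Markov chain Y^{A^c→}, obtained by sampling Y at the last position in A^c before each entrance into A. -/

import Mathlib

open MeasureTheory Set
open scoped ENNReal

/-- First entrance time at time ≥ 2 of a path `ω` into `A` from `Aᶜ`
(`0` if no such entrance occurs). This is the next entrance time after time `1`. -/
noncomputable def entrTime2 {X : Type*} (A : Set X) (ω : ℕ → X) : ℕ :=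
  sInf {k | 2 ≤ k ∧ ω (k - 1) ∉ A ∧ ω k ∈ A}

namespace Stmt11Aux

open scoped Classical

variable {X : Type*} [MeasurableSpace X]

/-- shift on path space -/
def sh : (ℕ → X) → (ℕ → X) := fun ω n => ω (n + 1)

lemma measurable_sh : Measurable (sh (X := X)) :=
  measurable_pi_lambda _ (fun n => measurable_pi_apply (n + 1))

lemma measurable_ev (n : ℕ) : Measurable (fun ω : ℕ → X => ω n) := measurable_pi_apply n

omit [MeasurableSpace X] in
lemma sh_iterate (m : ℕ) (ω : ℕ → X) : (sh^[m]) ω = fun n => ω (n + m) := by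
  induction m with
  | zero => simp
  | succ k ih =>
      rw [Function.iterate_succ_apply', ih]
      funext n
      show ω (n + 1 + k) = ω (n + (k + 1))
      congr 1
      omega

section P

variable (P : X → Measure (ℕ → X))

/-- one-step kernel -/
noncomputable def lam : X → Measure X := fun x => (P x).map (fun ω => ω 1)

variable {P}

lemma measurable_lam (hPmeas : Measurable P) : Measurable (lam P) :=
  (Measure.measurable_map _ (measurable_ev 1)).comp hPmeas

/-- the `ω 0 = x` a.s. trick -/
lemma inter_ev0 (hPprob : ∀ x, IsProbabilityMeasure (P x))
    (hP0 : ∀ x, (P x).map (fun ω => ω 0) = Measure.dirac x)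
    (x : X) {E : Set (ℕ → X)} {W : Set X} (hW : MeasurableSet W) :
    P x (E ∩ (fun ω : ℕ → X => ω 0) ⁻¹' W) = W.indicator (fun _ => P x E) x := by
  have := hPprob x
  have h1 : P x ((fun ω : ℕ → X => ω 0) ⁻¹' W) = W.indicator 1 x := by
    rw [← Measure.map_apply (measurable_ev 0) hW, hP0, Measure.dirac_apply' _ hW]
  by_cases hx : x ∈ W
  · simp only [indicator_of_mem hx]
    have hfull : P x ((fun ω : ℕ → X => ω 0) ⁻¹' W) = 1 := by
      rw [h1, indicator_of_mem hx]; rfl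
    have h2 : P x (((fun ω : ℕ → X => ω 0) ⁻¹' W)ᶜ) = 0 := by
      rw [measure_compl ((measurable_ev 0) hW) (measure_ne_top _ _), hfull, measure_univ]
      simp
    exact measure_inter_conull h2
  · simp only [indicator_of_notMem hx]
    refine measure_mono_null inter_subset_right ?_
    rw [h1, indicator_of_notMem hx]

variable (hPmeas : Measurable P)
    (hPprob : ∀ x, IsProbabilityMeasure (P x))
    (hP0 : ∀ x, (P x).map (fun ω => ω 0) = Measure.dirac x)
    (hPstep : ∀ x, (P x).map (fun ω n => ω (n + 1)) = ((P x).map (fun ω => ω 1)).bind P)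

include hPmeas hP0 in
lemma map_ev0 (m : Measure X) : (m.bind P).map (fun ω : ℕ → X => ω 0) = m := by
  ext V hV
  rw [Measure.map_apply (measurable_ev 0) hV, Measure.bind_apply ((measurable_ev 0) hV) hPmeas.aemeasurable]
  have h : ∀ x, P x ((fun ω : ℕ → X => ω 0) ⁻¹' V) = V.indicator 1 x := by
    intro x
    rw [← Measure.map_apply (measurable_ev 0) hV, hP0, Measure.dirac_apply' _ hV]
  simp_rw [h]
  rw [lintegral_indicator_one hV]

include hPmeas hPstep in
lemma map_sh (m : Measure X) : (m.bind P).map sh = (m.bind (lam P)).bind P := by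
  ext V hV
  rw [Measure.map_apply measurable_sh hV, Measure.bind_apply (measurable_sh hV) hPmeas.aemeasurable,
    Measure.bind_bind (measurable_lam hPmeas).aemeasurable hPmeas.aemeasurable,
    Measure.bind_apply hV (show Measurable (fun a : X => (lam P a).bind P) from
      (Measure.measurable_bind' hPmeas).comp (measurable_lam hPmeas)).aemeasurable]
  congr 1
  funext x
  rw [← Measure.map_apply measurable_sh hV]
  show (Measure.map (fun ω n => ω (n + 1)) (P x)) V = _
  rw [hPstep x]
  rfl

include hPmeas hP0 hPstep in
lemma marg (m : Measure X) (j : ℕ) :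
    (m.bind P).map (fun ω : ℕ → X => ω j) = ((fun ν : Measure X => ν.bind (lam P))^[j]) m := by
  induction j generalizing m with
  | zero => exact map_ev0 hPmeas hP0 m
  | succ k ih =>
      have hev : (fun ω : ℕ → X => ω (k + 1)) = (fun ω : ℕ → X => ω k) ∘ sh := rfl
      rw [hev, ← Measure.map_map (measurable_ev k) measurable_sh, map_sh hPmeas hPstep,
        ih, Function.iterate_succ_apply]

section Inv

variable (μ : Measure X)

include hPmeas in
lemma bind_lam_eq (hinv : Measure.map (fun ω => ω 1) (μ.bind P) = μ) :
    μ.bind (lam P) = μ := by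
  ext V hV
  rw [Measure.bind_apply hV (measurable_lam hPmeas).aemeasurable, ← hinv,
    Measure.map_apply (measurable_ev 1) hV, Measure.bind_apply ((measurable_ev 1) hV) hPmeas.aemeasurable]
  congr 1
  funext x
  rw [lam, Measure.map_apply (measurable_ev 1) hV]

include hPmeas in
lemma bind_lam_iter_eq (hinv : Measure.map (fun ω => ω 1) (μ.bind P) = μ) (j : ℕ) :
    ((fun ν : Measure X => ν.bind (lam P))^[j]) μ = μ := by
  induction j with
  | zero => rfl
  | succ k ih => rw [Function.iterate_succ_apply', ih, bind_lam_eq hPmeas μ hinv]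

include hPmeas hP0 hPstep in
lemma nu_marg (hinv : Measure.map (fun ω => ω 1) (μ.bind P) = μ) (j : ℕ) :
    (μ.bind P).map (fun ω : ℕ → X => ω j) = μ := by
  rw [marg hPmeas hP0 hPstep, bind_lam_iter_eq hPmeas μ hinv]

include hPmeas hPstep in
lemma nu_shift (hinv : Measure.map (fun ω => ω 1) (μ.bind P) = μ) :
    (μ.bind P).map sh = μ.bind P := by
  rw [map_sh hPmeas hPstep, bind_lam_eq hPmeas μ hinv]

include hPmeas hPstep in
lemma nu_shift_iter (hinv : Measure.map (fun ω => ω 1) (μ.bind P) = μ) (m : ℕ) :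
    (μ.bind P).map (sh^[m]) = μ.bind P := by
  induction m with
  | zero => simp [Measure.map_id]
  | succ k ih =>
      rw [Function.iterate_succ', ← Measure.map_map measurable_sh (measurable_sh.iterate k), ih,
        nu_shift hPmeas hPstep μ hinv]

include hPmeas hPprob hP0 hPstep in
/-- recurrence: a.e. path that visits `V` visits it at arbitrarily late times -/
lemma rec_null (hinv : Measure.map (fun ω => ω 1) (μ.bind P) = μ)
    (hrecur : ∀ B : Set X, MeasurableSet B → 0 < μ B →
      ((μ.restrict B).bind P) {ω | ∀ n, 1 ≤ n → ω n ∉ B} = 0)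
    {V : Set X} (hV : MeasurableSet V) :
    (μ.bind P) {ω | ∃ m, ω m ∈ V ∧ ∀ n > m, ω n ∉ V} = 0 := by
  have hTailEq : {ω : ℕ → X | ∀ n, 1 ≤ n → ω n ∉ V} =
      ⋂ k : ℕ, (fun ω : ℕ → X => ω (k + 1)) ⁻¹' Vᶜ := by
    ext ω
    simp only [mem_setOf_eq, mem_iInter, mem_preimage, mem_compl_iff]
    constructor
    · intro h k; exact h (k + 1) (by omega)
    · intro h n hn
      obtain ⟨k, rfl⟩ : ∃ k, n = k + 1 := ⟨n - 1, by omega⟩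
      exact h k
  have hTail : MeasurableSet {ω : ℕ → X | ∀ n, 1 ≤ n → ω n ∉ V} := by
    rw [hTailEq]
    exact MeasurableSet.iInter fun k => (measurable_ev (k + 1)) hV.compl
  have hBad0 : MeasurableSet ({ω : ℕ → X | ∀ n, 1 ≤ n → ω n ∉ V} ∩
      (fun ω : ℕ → X => ω 0) ⁻¹' V) := hTail.inter ((measurable_ev 0) hV)
  -- the base bad event has measure 0
  have hbase : (μ.bind P) ({ω : ℕ → X | ∀ n, 1 ≤ n → ω n ∉ V} ∩
      (fun ω : ℕ → X => ω 0) ⁻¹' V) = 0 := by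
    rw [Measure.bind_apply hBad0 hPmeas.aemeasurable]
    have h : ∀ x, P x ({ω : ℕ → X | ∀ n, 1 ≤ n → ω n ∉ V} ∩ (fun ω : ℕ → X => ω 0) ⁻¹' V)
        = V.indicator (fun _ => P x {ω : ℕ → X | ∀ n, 1 ≤ n → ω n ∉ V}) x :=
      fun x => inter_ev0 hPprob hP0 x hV
    simp_rw [h]
    have h2 : ∀ a, V.indicator (fun _ => P a {ω : ℕ → X | ∀ n, 1 ≤ n → ω n ∉ V}) a
        = V.indicator (fun y => P y {ω : ℕ → X | ∀ n, 1 ≤ n → ω n ∉ V}) a := by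
      intro a
      by_cases ha : a ∈ V <;> simp [ha]
    simp_rw [h2]
    rw [lintegral_indicator hV]
    by_cases hVpos : 0 < μ V
    · have := hrecur V hV hVpos
      rw [Measure.bind_apply hTail hPmeas.aemeasurable] at this
      rw [← this]
    · have hV0 : μ V = 0 := by
        by_contra hne
        exact hVpos (pos_iff_ne_zero.mpr (by simpa using hne))
      refine le_antisymm ?_ zero_le
      calc ∫⁻ x in V, P x {ω : ℕ → X | ∀ n, 1 ≤ n → ω n ∉ V} ∂μ
          ≤ ∫⁻ _ in V, 1 ∂μ := by
            refine lintegral_mono fun x => ?_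
            exact prob_le_one
        _ = μ V := by simp
        _ = 0 := hV0
  -- bad events at all times
  have hcover : {ω : ℕ → X | ∃ m, ω m ∈ V ∧ ∀ n > m, ω n ∉ V} ⊆
      ⋃ m : ℕ, (sh^[m]) ⁻¹' ({ω : ℕ → X | ∀ n, 1 ≤ n → ω n ∉ V} ∩
        (fun ω : ℕ → X => ω 0) ⁻¹' V) := by
    intro ω hω
    obtain ⟨m, hm, hafter⟩ := hω
    refine mem_iUnion.mpr ⟨m, ?_⟩
    simp only [mem_preimage, mem_inter_iff, mem_setOf_eq, sh_iterate]
    constructor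
    · intro n hn
      exact hafter (n + m) (by omega)
    · simpa using hm
  refine measure_mono_null hcover ?_
  refine measure_iUnion_null fun m => ?_
  have : (μ.bind P) ((sh^[m]) ⁻¹' ({ω : ℕ → X | ∀ n, 1 ≤ n → ω n ∉ V} ∩
      (fun ω : ℕ → X => ω 0) ⁻¹' V)) =
      ((μ.bind P).map (sh^[m])) ({ω : ℕ → X | ∀ n, 1 ≤ n → ω n ∉ V} ∩
      (fun ω : ℕ → X => ω 0) ⁻¹' V) := by
    rw [Measure.map_apply (measurable_sh.iterate m) hBad0]
  rw [this, nu_shift_iter hPmeas hPstep μ hinv m, hbase]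

end Inv

section Killed

variable {A : Set X}

end Killed

/-- killed kernel: kill transitions from `Aᶜ` into `A` -/
noncomputable def qk (P : X → Measure (ℕ → X)) (A : Set X) : X → Measure X :=
  fun x => if x ∈ A then lam P x else (lam P x).restrict Aᶜ

/-- one-step restricted kernel (into a target set) -/
noncomputable def lamr (P : X → Measure (ℕ → X)) (W : Set X) : X → Measure X :=
  fun x => (lam P x).restrict W

section Killed2

variable {A : Set X}

lemma measurable_lamr (hPmeas : Measurable P) {W : Set X} (hW : MeasurableSet W) :
    Measurable (lamr P W) := by
  refine Measure.measurable_of_measurable_coe _ fun s hs => ?_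
  simp_rw [lamr, Measure.restrict_apply hs]
  exact (Measure.measurable_coe (hs.inter hW)).comp (measurable_lam hPmeas)

lemma measurable_qk (hPmeas : Measurable P) (hA : MeasurableSet A) :
    Measurable (qk P A) := by
  have h1 : Measurable (lam P) := measurable_lam hPmeas
  have h2 : Measurable (lamr P Aᶜ) := measurable_lamr hPmeas hA.compl
  refine Measure.measurable_of_measurable_coe _ fun s hs => ?_
  have : (fun x => qk P A x s) =
      (fun x => if x ∈ A then lam P x s else lamr P Aᶜ x s) := by
    funext x
    by_cases hx : x ∈ A <;> simp [qk, lamr, hx]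
  rw [this]
  exact Measurable.ite hA ((Measure.measurable_coe hs).comp h1)
    ((Measure.measurable_coe hs).comp h2)

variable (hPmeas : Measurable P)
    (hPprob : ∀ x, IsProbabilityMeasure (P x))
    (hP0 : ∀ x, (P x).map (fun ω => ω 0) = Measure.dirac x)
    (hPstep : ∀ x, (P x).map (fun ω n => ω (n + 1)) = ((P x).map (fun ω => ω 1)).bind P)
    (hA : MeasurableSet A)

include hPmeas hPprob hP0 hPstep in
lemma P_sh_restrict (x : X) {W : Set X} (hW : MeasurableSet W)
    {R : Set (ℕ → X)} (hR : MeasurableSet R) :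
    P x (sh ⁻¹' ((fun ω : ℕ → X => ω 0) ⁻¹' W ∩ R)) = ∫⁻ y, P y R ∂((lam P x).restrict W) := by
  have hWR : MeasurableSet ((fun ω : ℕ → X => ω 0) ⁻¹' W ∩ R) :=
    ((measurable_ev 0) hW).inter hR
  have hmap : (P x).map sh = (lam P x).bind P := by
    show (P x).map sh = ((P x).map (fun ω => ω 1)).bind P
    rw [← hPstep x]
    rfl
  rw [← Measure.map_apply measurable_sh hWR, hmap, Measure.bind_apply hWR hPmeas.aemeasurable]
  have h : ∀ y, P y ((fun ω : ℕ → X => ω 0) ⁻¹' W ∩ R) = W.indicator (fun y' => P y' R) y := by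
    intro y
    rw [inter_comm, inter_ev0 hPprob hP0 y hW]
    by_cases hy : y ∈ W <;> simp [hy]
  simp_rw [h]
  rw [lintegral_indicator hW]

include hPmeas hPprob hP0 hPstep hA in
lemma step_reduce (m : Measure X) {R : Set (ℕ → X)} (hR : MeasurableSet R) :
    (m.bind P) ({ω : ℕ → X | ¬(ω 0 ∉ A ∧ ω 1 ∈ A)} ∩ sh ⁻¹' R)
      = ((m.bind (qk P A)).bind P) R := by
  have hqk := measurable_qk hPmeas hA
  -- decompose the event
  have hsplit : {ω : ℕ → X | ¬(ω 0 ∉ A ∧ ω 1 ∈ A)} ∩ sh ⁻¹' R =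
      ((fun ω : ℕ → X => ω 0) ⁻¹' A ∩ sh ⁻¹' ((fun ω : ℕ → X => ω 0) ⁻¹' univ ∩ R)) ∪
      ((fun ω : ℕ → X => ω 0) ⁻¹' Aᶜ ∩ sh ⁻¹' ((fun ω : ℕ → X => ω 0) ⁻¹' Aᶜ ∩ R)) := by
    ext ω
    simp only [mem_inter_iff, mem_setOf_eq, mem_union, mem_preimage, mem_compl_iff, mem_univ,
      true_and]
    constructor
    · rintro ⟨h0, hr⟩
      by_cases hω0 : ω 0 ∈ A
      · exact Or.inl ⟨hω0, hr⟩
      · refine Or.inr ⟨hω0, ?_, hr⟩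
        intro h1
        exact h0 ⟨hω0, h1⟩
    · rintro (⟨h0, hr⟩ | ⟨h0, h1, hr⟩)
      · exact ⟨fun hc => hc.1 h0, hr⟩
      · exact ⟨fun hc => h1 hc.2, hr⟩
  have hdisj : Disjoint
      ((fun ω : ℕ → X => ω 0) ⁻¹' A ∩ sh ⁻¹' ((fun ω : ℕ → X => ω 0) ⁻¹' univ ∩ R))
      ((fun ω : ℕ → X => ω 0) ⁻¹' Aᶜ ∩ sh ⁻¹' ((fun ω : ℕ → X => ω 0) ⁻¹' Aᶜ ∩ R)) := by
    refine Set.disjoint_left.mpr ?_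
    rintro ω ⟨h1, _⟩ ⟨h2, _⟩
    exact h2 h1
  have hmR : ∀ (W : Set X), MeasurableSet W →
      MeasurableSet (sh ⁻¹' ((fun ω : ℕ → X => ω 0) ⁻¹' W ∩ R)) := fun W hW =>
    measurable_sh (((measurable_ev 0) hW).inter hR)
  have hmeasE : MeasurableSet ({ω : ℕ → X | ¬(ω 0 ∉ A ∧ ω 1 ∈ A)} ∩ sh ⁻¹' R) := by
    rw [hsplit]
    exact (((measurable_ev 0) hA).inter (hmR univ MeasurableSet.univ)).union
      (((measurable_ev 0) hA.compl).inter (hmR Aᶜ hA.compl))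
  rw [Measure.bind_apply hmeasE hPmeas.aemeasurable]
  have hPE : ∀ x, P x ({ω : ℕ → X | ¬(ω 0 ∉ A ∧ ω 1 ∈ A)} ∩ sh ⁻¹' R)
      = ∫⁻ y, P y R ∂(qk P A x) := by
    intro x
    rw [hsplit]
    rw [measure_union hdisj (((measurable_ev 0) hA.compl).inter (hmR Aᶜ hA.compl))]
    rw [inter_comm ((fun ω : ℕ → X => ω 0) ⁻¹' A),
      inter_comm ((fun ω : ℕ → X => ω 0) ⁻¹' Aᶜ),
      inter_ev0 hPprob hP0 x hA, inter_ev0 hPprob hP0 x hA.compl,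
      P_sh_restrict hPmeas hPprob hP0 hPstep x MeasurableSet.univ hR,
      P_sh_restrict hPmeas hPprob hP0 hPstep x hA.compl hR]
    by_cases hx : x ∈ A
    · simp [qk, hx, Measure.restrict_univ]
    · simp [qk, hx, Measure.restrict_univ]
  simp_rw [hPE]
  rw [Measure.bind_bind hqk.aemeasurable hPmeas.aemeasurable,
    Measure.bind_apply hR (show Measurable (fun x : X => (qk P A x).bind P) from
      (Measure.measurable_bind' hPmeas).comp hqk).aemeasurable]
  congr 1
  funext x
  rw [Measure.bind_apply hR hPmeas.aemeasurable]

/-- no entrance from `Aᶜ` into `A` at times `1, …, N` -/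
def Kev (A : Set X) (N : ℕ) : Set (ℕ → X) := {ω | ∀ j < N, ¬(ω j ∉ A ∧ ω (j + 1) ∈ A)}

/-- at time `N` in `B`, at time `N+1` in `A` -/
def TailE (A B : Set X) (N : ℕ) : Set (ℕ → X) :=
  (fun ω : ℕ → X => ω N) ⁻¹' B ∩ (fun ω : ℕ → X => ω (N + 1)) ⁻¹' A

omit [MeasurableSpace X] in
lemma Kev_zero : Kev (X := X) A 0 = univ := by
  ext ω; simp [Kev]

omit [MeasurableSpace X] in
lemma Kev_succ (N : ℕ) :
    Kev (X := X) A (N + 1) = {ω : ℕ → X | ¬(ω 0 ∉ A ∧ ω 1 ∈ A)} ∩ sh ⁻¹' (Kev A N) := by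
  ext ω
  simp only [Kev, mem_setOf_eq, mem_inter_iff, mem_preimage, sh]
  constructor
  · intro h
    exact ⟨h 0 (by omega), fun j hj => h (j + 1) (by omega)⟩
  · rintro ⟨h0, h⟩ j hj
    match j with
    | 0 => exact h0
    | (k + 1) => exact h k (by omega)

omit [MeasurableSpace X] in
lemma TailE_succ (N : ℕ) : TailE (X := X) A B (N + 1) = sh ⁻¹' TailE A B N := by
  ext ω
  simp [TailE, sh]

lemma measurable_Kev (hA : MeasurableSet A) (N : ℕ) : MeasurableSet (Kev (X := X) A N) := by
  induction N with
  | zero => rw [Kev_zero]; exact MeasurableSet.univ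
  | succ k ih =>
      rw [Kev_succ]
      refine MeasurableSet.inter ?_ (measurable_sh ih)
      have : {ω : ℕ → X | ¬(ω 0 ∉ A ∧ ω 1 ∈ A)} =
          ((fun ω : ℕ → X => ω 0) ⁻¹' Aᶜ ∩ (fun ω : ℕ → X => ω 1) ⁻¹' A)ᶜ := by
        ext ω; simp
      rw [this]
      exact (((measurable_ev 0) hA.compl).inter ((measurable_ev 1) hA)).compl

lemma measurable_TailE (hA : MeasurableSet A) (hB : MeasurableSet B) (N : ℕ) :
    MeasurableSet (TailE (X := X) A B N) :=
  ((measurable_ev N) hB).inter ((measurable_ev (N + 1)) hA)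

include hPmeas hPprob hP0 hPstep hA in
lemma KLB {B : Set X} (hB : MeasurableSet B) (N : ℕ) (m : Measure X) :
    (m.bind P) (Kev A N ∩ TailE A B N)
      = ∫⁻ x in B, lam P x A ∂(((fun ν : Measure X => ν.bind (qk P A))^[N]) m) := by
  induction N generalizing m with
  | zero =>
      rw [Kev_zero, univ_inter]
      show (m.bind P) (TailE A B 0) = ∫⁻ x in B, lam P x A ∂m
      rw [Measure.bind_apply (measurable_TailE hA hB 0) hPmeas.aemeasurable]
      have h : ∀ x, P x (TailE A B 0) = B.indicator (fun y => lam P y A) x := by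
        intro x
        rw [TailE, inter_comm, inter_ev0 hPprob hP0 x hB]
        have : P x ((fun ω : ℕ → X => ω (0 + 1)) ⁻¹' A) = lam P x A := by
          rw [lam, Measure.map_apply (measurable_ev 1) hA]
        by_cases hx : x ∈ B <;> simp [hx, this]
      simp_rw [h]
      rw [lintegral_indicator hB]
  | succ N ih =>
      have hset : Kev A (N + 1) ∩ TailE A B (N + 1)
          = {ω : ℕ → X | ¬(ω 0 ∉ A ∧ ω 1 ∈ A)} ∩ sh ⁻¹' (Kev A N ∩ TailE A B N) := by
        rw [Kev_succ, TailE_succ, preimage_inter, inter_assoc]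
      rw [hset, step_reduce hPmeas hPprob hP0 hPstep hA m
        ((measurable_Kev hA N).inter (measurable_TailE hA hB N)), Measure.bind_apply
        ((measurable_Kev hA N).inter (measurable_TailE hA hB N)) hPmeas.aemeasurable,
        ← Measure.bind_apply ((measurable_Kev hA N).inter (measurable_TailE hA hB N)) hPmeas.aemeasurable,
        ih (m.bind (qk P A)), Function.iterate_succ_apply]

section WithMu

variable (μ : Measure X)

/-- the entrance measure: mass entering `A` from `Aᶜ` in one step, under `μ` -/
noncomputable def eM (P : X → Measure (ℕ → X)) (A : Set X) (μ : Measure X) : Measure X :=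
  (μ.restrict Aᶜ).bind (lamr P A)

include hPmeas hPprob hP0 hPstep hA in
lemma RS_reduce {R : Set (ℕ → X)} (hR : MeasurableSet R) :
    ∫⁻ x in Aᶜ, P x ((fun ω : ℕ → X => ω 1) ⁻¹' A ∩ sh ⁻¹' R) ∂μ
      = ((eM P A μ).bind P) R := by
  have hset : (fun ω : ℕ → X => ω 1) ⁻¹' A ∩ sh ⁻¹' R
      = sh ⁻¹' ((fun ω : ℕ → X => ω 0) ⁻¹' A ∩ R) := by
    ext ω; simp [sh]
  have h : ∀ x, P x ((fun ω : ℕ → X => ω 1) ⁻¹' A ∩ sh ⁻¹' R)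
      = ∫⁻ y, P y R ∂(lamr P A x) := by
    intro x
    rw [hset]
    exact P_sh_restrict hPmeas hPprob hP0 hPstep x hA hR
  simp_rw [h]
  rw [eM, Measure.bind_apply hR hPmeas.aemeasurable,
    Measure.lintegral_bind (measurable_lamr hPmeas hA).aemeasurable
      (show Measurable (fun y : X => P y R) from (Measure.measurable_coe hR).comp hPmeas).aemeasurable]

include hPmeas hA in
lemma star (hinv : Measure.map (fun ω => ω 1) (μ.bind P) = μ) :
    μ.bind (qk P A) + eM P A μ = μ := by
  have hqk := measurable_qk hPmeas hA
  ext V hV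
  rw [Measure.add_apply, Measure.bind_apply hV hqk.aemeasurable, eM,
    Measure.bind_apply hV (measurable_lamr hPmeas hA).aemeasurable]
  have hlamr : ∀ x, lamr P A x V = lam P x (V ∩ A) := by
    intro x; rw [lamr, Measure.restrict_apply hV]
  simp_rw [hlamr]
  have hres : ∫⁻ x, lam P x (V ∩ A) ∂(μ.restrict Aᶜ)
      = ∫⁻ x, Aᶜ.indicator (fun y => lam P y (V ∩ A)) x ∂μ := by
    rw [lintegral_indicator hA.compl]
  rw [hres, ← lintegral_add_left (show Measurable (fun x : X => qk P A x V) from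
    (Measure.measurable_coe hV).comp (measurable_qk hPmeas hA))]
  have key : ∀ x, qk P A x V + Aᶜ.indicator (fun y => lam P y (V ∩ A)) x = lam P x V := by
    intro x
    by_cases hx : x ∈ A
    · have hx' : x ∉ Aᶜ := by simpa using hx
      simp only [qk, if_pos hx, indicator_of_notMem hx']
      simp
    · simp only [qk, if_neg hx, indicator_of_mem (by simpa using hx : x ∈ Aᶜ)]
      rw [Measure.restrict_apply hV, add_comm]
      have := measure_inter_add_diff (μ := lam P x) V hA
      rw [diff_eq] at this
      exact this
  simp_rw [key]
  have : ∫⁻ x, lam P x V ∂μ = (μ.bind (lam P)) V := by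
    rw [Measure.bind_apply hV (measurable_lam hPmeas).aemeasurable]
  rw [this, bind_lam_eq hPmeas μ hinv]

lemma qk_key (hA : MeasurableSet A) {V : Set X} (hV : MeasurableSet V) (x : X) :
    qk P A x V + Aᶜ.indicator (fun y => lamr P A y V) x = lam P x V := by
  have hlamr : ∀ y, lamr P A y V = lam P y (V ∩ A) := by
    intro y; rw [lamr, Measure.restrict_apply hV]
  by_cases hx : x ∈ A
  · have hx' : x ∉ Aᶜ := by simpa using hx
    simp only [qk, if_pos hx, indicator_of_notMem hx']
    simp
  · simp only [qk, if_neg hx, indicator_of_mem (by simpa using hx : x ∈ Aᶜ), hlamr]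
    rw [Measure.restrict_apply hV, add_comm]
    have := measure_inter_add_diff (μ := lam P x) V hA
    rw [diff_eq] at this
    exact this

/-- additivity of bind in the measure argument -/
lemma bind_add_meas {κ : X → Measure X} (hκ : Measurable κ) (m1 m2 : Measure X) :
    (m1 + m2).bind κ = m1.bind κ + m2.bind κ := by
  ext V hV
  rw [Measure.add_apply, Measure.bind_apply hV hκ.aemeasurable, Measure.bind_apply hV hκ.aemeasurable,
    Measure.bind_apply hV hκ.aemeasurable, lintegral_add_measure]

lemma bind_mono_meas {κ : X → Measure X} (hκ : Measurable κ) {m1 m2 : Measure X}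
    (h : m1 ≤ m2) : m1.bind κ ≤ m2.bind κ := by
  refine Measure.le_iff.mpr fun V hV => ?_
  rw [Measure.bind_apply hV hκ.aemeasurable, Measure.bind_apply hV hκ.aemeasurable]
  exact lintegral_mono' h (le_refl _)

lemma iter_bind_add {κ : X → Measure X} (hκ : Measurable κ) (k : ℕ) (m1 m2 : Measure X) :
    ((fun ν : Measure X => ν.bind κ)^[k]) (m1 + m2)
      = ((fun ν : Measure X => ν.bind κ)^[k]) m1 + ((fun ν : Measure X => ν.bind κ)^[k]) m2 := by
  induction k generalizing m1 m2 with
  | zero => rfl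
  | succ n ih => rw [Function.iterate_succ_apply, Function.iterate_succ_apply,
      Function.iterate_succ_apply, bind_add_meas hκ, ih]

lemma iter_bind_mono {κ : X → Measure X} (hκ : Measurable κ) (k : ℕ) {m1 m2 : Measure X}
    (h : m1 ≤ m2) :
    ((fun ν : Measure X => ν.bind κ)^[k]) m1 ≤ ((fun ν : Measure X => ν.bind κ)^[k]) m2 := by
  induction k generalizing m1 m2 with
  | zero => exact h
  | succ n ih => rw [Function.iterate_succ_apply, Function.iterate_succ_apply]
                 exact ih (bind_mono_meas hκ h)

lemma bind_zero_meas {κ : X → Measure X} (hκ : Measurable κ) : (0 : Measure X).bind κ = 0 := by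
  ext V hV
  rw [Measure.bind_apply hV hκ.aemeasurable]
  simp

lemma bind_finset_sum {κ : X → Measure X} (hκ : Measurable κ) (s : Finset ℕ)
    (f : ℕ → Measure X) : (∑ j ∈ s, f j).bind κ = ∑ j ∈ s, (f j).bind κ := by
  classical
  induction s using Finset.induction with
  | empty => simpa using bind_zero_meas hκ
  | insert _ _ hx ih =>
      rw [Finset.sum_insert hx, Finset.sum_insert hx, bind_add_meas hκ, ih]

lemma sum_bind {κ : X → Measure X} (hκ : Measurable κ) (f : ℕ → Measure X) :
    (Measure.sum f).bind κ = Measure.sum (fun k => (f k).bind κ) := by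
  ext V hV
  rw [Measure.bind_apply hV hκ.aemeasurable, Measure.sum_apply _ hV, lintegral_sum_measure]
  congr 1
  funext k
  rw [Measure.bind_apply hV hκ.aemeasurable]

section Final

variable (μ : Measure X) [SigmaFinite μ]

/-- iterated killed evolution of the entrance measure -/
noncomputable def ek (P : X → Measure (ℕ → X)) (A : Set X) (μ : Measure X) (k : ℕ) : Measure X :=
  ((fun ν : Measure X => ν.bind (qk P A))^[k]) (eM P A μ)

/-- total potential of the entrance measure under the killed evolution -/
noncomputable def GM (P : X → Measure (ℕ → X)) (A : Set X) (μ : Measure X) : Measure X :=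
  Measure.sum (ek P A μ)

include hPmeas hA in
lemma tele (hinv : Measure.map (fun ω => ω 1) (μ.bind P) = μ) (N : ℕ) :
    μ = ((fun ν : Measure X => ν.bind (qk P A))^[N]) μ
        + ∑ k ∈ Finset.range N, ek P A μ k := by
  have hqk := measurable_qk hPmeas hA
  induction N with
  | zero => simp
  | succ n ih =>
      have h1 : ((fun ν : Measure X => ν.bind (qk P A))^[n]) μ
          = ((fun ν : Measure X => ν.bind (qk P A))^[n + 1]) μ + ek P A μ n := by
        conv_lhs => rw [show μ = μ.bind (qk P A) + eM P A μ from (star hPmeas hA μ hinv).symm]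
        rw [iter_bind_add hqk, Function.iterate_succ_apply]
        rfl
      rw [Finset.sum_range_succ]
      calc μ = ((fun ν : Measure X => ν.bind (qk P A))^[n]) μ
            + ∑ k ∈ Finset.range n, ek P A μ k := ih
        _ = (((fun ν : Measure X => ν.bind (qk P A))^[n + 1]) μ + ek P A μ n)
            + ∑ k ∈ Finset.range n, ek P A μ k := by rw [← h1]
        _ = ((fun ν : Measure X => ν.bind (qk P A))^[n + 1]) μ
            + (∑ k ∈ Finset.range n, ek P A μ k + ek P A μ n) := by abel

include hPmeas hA in
lemma GM_le (hinv : Measure.map (fun ω => ω 1) (μ.bind P) = μ) : GM P A μ ≤ μ := by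
  refine Measure.le_iff.mpr fun V hV => ?_
  rw [GM, Measure.sum_apply _ hV, ENNReal.tsum_eq_iSup_sum]
  refine iSup_le fun s => ?_
  obtain ⟨n, hn⟩ := Finset.exists_nat_subset_range s
  calc ∑ k ∈ s, ek P A μ k V ≤ ∑ k ∈ Finset.range n, ek P A μ k V :=
        Finset.sum_le_sum_of_subset hn
    _ ≤ μ V := by
        conv_rhs => rw [tele hPmeas hA μ hinv n]
        rw [Measure.add_apply]
        have : (∑ k ∈ Finset.range n, ek P A μ k) V
            = ∑ k ∈ Finset.range n, ek P A μ k V := by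
          simp [Finset.sum_apply']
        rw [this]
        exact le_add_self

include hPmeas hA in
lemma GM_fix (hinv : Measure.map (fun ω => ω 1) (μ.bind P) = μ) :
    (GM P A μ).bind (qk P A) + eM P A μ = GM P A μ := by
  have hqk := measurable_qk hPmeas hA
  rw [GM, sum_bind hqk]
  have h1 : (fun k => (ek P A μ k).bind (qk P A)) = fun k => ek P A μ (k + 1) := by
    funext k
    rw [ek, ek, Function.iterate_succ_apply']
  rw [h1]
  ext V hV
  rw [Measure.add_apply, Measure.sum_apply _ hV, Measure.sum_apply _ hV, add_comm]
  have h0 : eM P A μ V = ek P A μ 0 V := rfl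
  rw [h0]
  have h2 : ∀ i : ℕ, (ek P A μ (i + 1)) V = (fun j => ek P A μ j V) (i + 1) := fun i => rfl
  exact (tsum_eq_zero_add' (f := fun j => ek P A μ j V) ENNReal.summable).symm

/-- the non-swept part of `μ` -/
noncomputable def etaM (P : X → Measure (ℕ → X)) (A : Set X) (μ : Measure X) [SigmaFinite μ] :
    Measure X :=
  Measure.sum (fun i =>
    (μ.restrict (disjointed (spanningSets μ) i)) - ((GM P A μ).restrict (disjointed (spanningSets μ) i)))

include hPmeas hA in
lemma etaM_add_GM (hinv : Measure.map (fun ω => ω 1) (μ.bind P) = μ) :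
    etaM P A μ + GM P A μ = μ := by
  have hGle := GM_le hPmeas hA μ hinv
  have hYm : ∀ i, MeasurableSet (disjointed (spanningSets μ) i) :=
    MeasurableSet.disjointed fun i => measurableSet_spanningSets μ i
  have hYfin : ∀ i, μ (disjointed (spanningSets μ) i) < ⊤ := fun i =>
    lt_of_le_of_lt (measure_mono (disjointed_subset _ _)) (measure_spanningSets_lt_top μ i)
  have hYun : (⋃ i, disjointed (spanningSets μ) i) = univ := by
    rw [iUnion_disjointed, iUnion_spanningSets]
  ext V hV
  have hiF : ∀ i, IsFiniteMeasure ((GM P A μ).restrict (disjointed (spanningSets μ) i)) := by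
    intro i
    constructor
    rw [Measure.restrict_apply MeasurableSet.univ, univ_inter]
    exact lt_of_le_of_lt (Measure.le_iff.mp hGle _ (hYm i)) (hYfin i)
  have hres_le : ∀ i, (GM P A μ).restrict (disjointed (spanningSets μ) i)
      ≤ μ.restrict (disjointed (spanningSets μ) i) :=
    fun i => Measure.restrict_mono (subset_refl _) hGle
  have hpart : ∀ (m : Measure X), m V = ∑' i, m (V ∩ disjointed (spanningSets μ) i) := by
    intro m
    rw [← measure_iUnion (fun i j hij => Disjoint.mono inter_subset_right inter_subset_right
        ((disjoint_disjointed _) hij)) (fun i => hV.inter (hYm i)),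
      ← inter_iUnion, hYun, inter_univ]
  rw [Measure.add_apply, etaM, Measure.sum_apply _ hV, hpart μ, hpart (GM P A μ)]
  have hterm : ∀ i, ((μ.restrict (disjointed (spanningSets μ) i))
      - ((GM P A μ).restrict (disjointed (spanningSets μ) i))) V
      = μ (V ∩ disjointed (spanningSets μ) i) - (GM P A μ) (V ∩ disjointed (spanningSets μ) i) := by
    intro i
    haveI := hiF i
    rw [Measure.sub_apply hV (hres_le i), Measure.restrict_apply hV, Measure.restrict_apply hV]
  simp_rw [hterm]
  rw [← ENNReal.tsum_add]
  congr 1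
  funext i
  exact tsub_add_cancel_of_le (by
    refine le_trans (Measure.le_iff.mp hGle _ (hV.inter (hYm i))) (le_refl _))

omit hPmeas hPprob hP0 hPstep hA in
lemma cancel_meas {α β γ : Measure X} (hγ : γ ≤ μ) (h : α + γ = β + γ) : α = β := by
  have hYm : ∀ i, MeasurableSet (disjointed (spanningSets μ) i) :=
    MeasurableSet.disjointed fun i => measurableSet_spanningSets μ i
  have hYfin : ∀ i, μ (disjointed (spanningSets μ) i) < ⊤ := fun i =>
    lt_of_le_of_lt (measure_mono (disjointed_subset _ _)) (measure_spanningSets_lt_top μ i)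
  have hYun : (⋃ i, disjointed (spanningSets μ) i) = univ := by
    rw [iUnion_disjointed, iUnion_spanningSets]
  have hpart : ∀ (m : Measure X) {V : Set X}, MeasurableSet V →
      m V = ∑' i, m (V ∩ disjointed (spanningSets μ) i) := by
    intro m V hV
    rw [← measure_iUnion (fun i j hij => Disjoint.mono inter_subset_right inter_subset_right
        ((disjoint_disjointed _) hij)) (fun i => hV.inter (hYm i)),
      ← inter_iUnion, hYun, inter_univ]
  ext V hV
  rw [hpart α hV, hpart β hV]
  congr 1
  funext i
  have hVi : MeasurableSet (V ∩ disjointed (spanningSets μ) i) := hV.inter (hYm i)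
  have h1 : α (V ∩ disjointed (spanningSets μ) i) + γ (V ∩ disjointed (spanningSets μ) i)
      = β (V ∩ disjointed (spanningSets μ) i) + γ (V ∩ disjointed (spanningSets μ) i) := by
    rw [← Measure.add_apply, ← Measure.add_apply, h]
  have hfin : γ (V ∩ disjointed (spanningSets μ) i) ≠ ⊤ :=
    (lt_of_le_of_lt (le_trans (measure_mono inter_subset_right) (Measure.le_iff.mp hγ _ (hYm i)))
      (hYfin i)).ne
  exact WithTop.add_right_cancel hfin h1

include hPmeas hA in
lemma bind_lam_split (m : Measure X) :
    m.bind (lam P) = m.bind (qk P A) + (m.restrict Aᶜ).bind (lamr P A) := by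
  ext V hV
  rw [Measure.add_apply, Measure.bind_apply hV (measurable_lam hPmeas).aemeasurable,
    Measure.bind_apply hV (measurable_qk hPmeas hA).aemeasurable,
    Measure.bind_apply hV (measurable_lamr hPmeas hA).aemeasurable]
  have hres : ∫⁻ x, lamr P A x V ∂(m.restrict Aᶜ)
      = ∫⁻ x, Aᶜ.indicator (fun y => lamr P A y V) x ∂m := by
    rw [lintegral_indicator hA.compl]
  rw [hres, ← lintegral_add_left (show Measurable (fun x : X => qk P A x V) from
    (Measure.measurable_coe hV).comp (measurable_qk hPmeas hA))]
  congr 1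
  funext x
  exact (qk_key (P := P) hA hV x).symm

include hPmeas hA in
lemma etaM_qk_fix (hinv : Measure.map (fun ω => ω 1) (μ.bind P) = μ) :
    (etaM P A μ).bind (qk P A) = etaM P A μ := by
  have hqk := measurable_qk hPmeas hA
  have hGle := GM_le hPmeas hA μ hinv
  have h1 : (etaM P A μ).bind (qk P A) + GM P A μ = etaM P A μ + GM P A μ := by
    conv_lhs => rw [← GM_fix hPmeas hA μ hinv]
    rw [← add_assoc, ← bind_add_meas hqk, etaM_add_GM hPmeas hA μ hinv,
      star hPmeas hA μ hinv, ← etaM_add_GM hPmeas hA μ hinv]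
  exact cancel_meas μ hGle h1

/-- entrance flow of the non-swept part -/
noncomputable def etil (P : X → Measure (ℕ → X)) (A : Set X) (μ : Measure X) [SigmaFinite μ] :
    Measure X :=
  ((etaM P A μ).restrict Aᶜ).bind (lamr P A)

include hPmeas hA in
lemma etaM_lam (hinv : Measure.map (fun ω => ω 1) (μ.bind P) = μ) :
    (etaM P A μ).bind (lam P) = etaM P A μ + etil P A μ := by
  rw [bind_lam_split hPmeas hA, etaM_qk_fix hPmeas hA μ hinv]
  rfl

include hPmeas hA in
lemma etaM_le (hinv : Measure.map (fun ω => ω 1) (μ.bind P) = μ) : etaM P A μ ≤ μ := by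
  conv_rhs => rw [← etaM_add_GM hPmeas hA μ hinv]
  refine Measure.le_iff.mpr fun V hV => ?_
  rw [Measure.add_apply]
  exact le_self_add

include hPmeas hA in
lemma IDk (hinv : Measure.map (fun ω => ω 1) (μ.bind P) = μ) (k : ℕ) :
    ((fun ν : Measure X => ν.bind (lam P))^[k]) (etaM P A μ)
      = etaM P A μ + ∑ j ∈ Finset.range k,
          ((fun ν : Measure X => ν.bind (lam P))^[j]) (etil P A μ) := by
  have hlam := measurable_lam hPmeas
  induction k with
  | zero => simp
  | succ n ih =>
      rw [Function.iterate_succ_apply', ih, bind_add_meas hlam,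
        etaM_lam hPmeas hA μ hinv, Finset.sum_range_succ']
      have hsum : (∑ j ∈ Finset.range n,
          ((fun ν : Measure X => ν.bind (lam P))^[j]) (etil P A μ)).bind (lam P)
          = ∑ j ∈ Finset.range n,
            ((fun ν : Measure X => ν.bind (lam P))^[j + 1]) (etil P A μ) := by
        rw [bind_finset_sum hlam]
        refine Finset.sum_congr rfl fun j _ => ?_
        rw [Function.iterate_succ_apply']
      rw [hsum]
      simp only [Function.iterate_zero_apply]
      abel

include hPmeas hA in
lemma sum_etil_le (hinv : Measure.map (fun ω => ω 1) (μ.bind P) = μ) (k : ℕ) :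
    ∑ j ∈ Finset.range k, ((fun ν : Measure X => ν.bind (lam P))^[j]) (etil P A μ) ≤ μ := by
  have h1 := IDk hPmeas hA μ hinv k
  have h2 : ((fun ν : Measure X => ν.bind (lam P))^[k]) (etaM P A μ) ≤ μ := by
    calc ((fun ν : Measure X => ν.bind (lam P))^[k]) (etaM P A μ)
        ≤ ((fun ν : Measure X => ν.bind (lam P))^[k]) μ :=
          iter_bind_mono (measurable_lam hPmeas) k (etaM_le hPmeas hA μ hinv)
      _ = μ := bind_lam_iter_eq hPmeas μ hinv k
  calc ∑ j ∈ Finset.range k, ((fun ν : Measure X => ν.bind (lam P))^[j]) (etil P A μ)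
      ≤ etaM P A μ + ∑ j ∈ Finset.range k,
          ((fun ν : Measure X => ν.bind (lam P))^[j]) (etil P A μ) := by
        refine Measure.le_iff.mpr fun V hV => ?_
        rw [Measure.add_apply]
        exact le_add_self
    _ = ((fun ν : Measure X => ν.bind (lam P))^[k]) (etaM P A μ) := h1.symm
    _ ≤ μ := h2

include hPmeas hPprob hP0 hPstep hA in
lemma etil_zero (hinv : Measure.map (fun ω => ω 1) (μ.bind P) = μ)
    (hrecur : ∀ B : Set X, MeasurableSet B → 0 < μ B →
      ((μ.restrict B).bind P) {ω | ∀ n, 1 ≤ n → ω n ∉ B} = 0) :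
    etil P A μ = 0 := by
  have hYm : ∀ i, MeasurableSet (disjointed (spanningSets μ) i) :=
    MeasurableSet.disjointed fun i => measurableSet_spanningSets μ i
  have hYfin : ∀ i, μ (disjointed (spanningSets μ) i) < ⊤ := fun i =>
    lt_of_le_of_lt (measure_mono (disjointed_subset _ _)) (measure_spanningSets_lt_top μ i)
  have hYun : (⋃ i, disjointed (spanningSets μ) i) = univ := by
    rw [iUnion_disjointed, iUnion_spanningSets]
  -- it suffices to show etil vanishes on each spanning piece
  have hmain : ∀ i : ℕ, etil P A μ (disjointed (spanningSets μ) i) = 0 := by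
    intro i
    set V : Set X := disjointed (spanningSets μ) i with hVdef
    have hV : MeasurableSet V := hYm i
    -- the path law started from etil
    set PP : Measure (ℕ → X) := (etil P A μ).bind P with hPPdef
    -- expected number of visits to V is finite
    have hcount : ∑' j : ℕ, PP ((fun ω : ℕ → X => ω j) ⁻¹' V) ≤ μ V := by
      have hmarg : ∀ j : ℕ, PP ((fun ω : ℕ → X => ω j) ⁻¹' V)
          = ((fun ν : Measure X => ν.bind (lam P))^[j]) (etil P A μ) V := by
        intro j
        rw [hPPdef, ← Measure.map_apply (measurable_ev j) hV, marg hPmeas hP0 hPstep]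
      simp_rw [hmarg]
      rw [ENNReal.tsum_eq_iSup_sum]
      refine iSup_le fun s => ?_
      obtain ⟨n, hn⟩ := Finset.exists_nat_subset_range s
      calc ∑ j ∈ s, ((fun ν : Measure X => ν.bind (lam P))^[j]) (etil P A μ) V
          ≤ ∑ j ∈ Finset.range n, ((fun ν : Measure X => ν.bind (lam P))^[j]) (etil P A μ) V :=
            Finset.sum_le_sum_of_subset hn
        _ = (∑ j ∈ Finset.range n, ((fun ν : Measure X => ν.bind (lam P))^[j]) (etil P A μ)) V := by
            simp [Finset.sum_apply']
        _ ≤ μ V := Measure.le_iff.mp (sum_etil_le hPmeas hA μ hinv n) V hV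
    -- etil is dominated by μ
    have hetil_le : etil P A μ ≤ μ := by
      calc etil P A μ ≤ (μ.restrict Aᶜ).bind (lamr P A) := by
            refine bind_mono_meas (measurable_lamr hPmeas hA) ?_
            exact Measure.restrict_mono (subset_refl _) (etaM_le hPmeas hA μ hinv)
        _ = ek P A μ 0 := rfl
        _ ≤ GM P A μ := Measure.le_sum _ 0
        _ ≤ μ := GM_le hPmeas hA μ hinv
    have hPPle : PP ≤ μ.bind P := by
      refine Measure.le_iff.mpr fun E hE => ?_
      rw [hPPdef, Measure.bind_apply hE hPmeas.aemeasurable, Measure.bind_apply hE hPmeas.aemeasurable]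
      exact lintegral_mono' hetil_le (le_refl _)
    -- a.e. under PP, the set of visit times to V is not infinite
    have hF : Measurable (fun ω : ℕ → X => ∑' j : ℕ,
        ((fun ω' : ℕ → X => ω' j) ⁻¹' V).indicator (1 : (ℕ → X) → ℝ≥0∞) ω) := by
      refine Measurable.ennreal_tsum fun j => ?_
      exact measurable_one.indicator ((measurable_ev j) hV)
    have hFint : ∫⁻ ω, (∑' j : ℕ,
        ((fun ω' : ℕ → X => ω' j) ⁻¹' V).indicator (1 : (ℕ → X) → ℝ≥0∞) ω) ∂PP ≠ ⊤ := by
      rw [lintegral_tsum fun j =>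
        (measurable_one.indicator ((measurable_ev j) hV)).aemeasurable]
      have : ∀ j : ℕ, ∫⁻ ω, ((fun ω' : ℕ → X => ω' j) ⁻¹' V).indicator
          (1 : (ℕ → X) → ℝ≥0∞) ω ∂PP = PP ((fun ω' : ℕ → X => ω' j) ⁻¹' V) := by
        intro j
        rw [← lintegral_indicator_one ((measurable_ev j) hV)]
      simp_rw [this]
      exact (lt_of_le_of_lt hcount (hYfin i)).ne
    have hIO : PP {ω : ℕ → X | {j : ℕ | ω j ∈ V}.Infinite} = 0 := by
      have hae := ae_lt_top hF hFint
      rw [← nonpos_iff_eq_zero]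
      refine le_trans (measure_mono ?_) (le_of_eq (ae_iff.mp hae))
      intro ω hω
      simp only [mem_setOf_eq, not_lt, top_le_iff]
      have hinf : (∑' j : ℕ, ({j : ℕ | ω j ∈ V}).indicator (1 : ℕ → ℝ≥0∞) j) = ⊤ := by
        rw [← tsum_subtype]
        haveI := hω.to_subtype
        exact ENNReal.tsum_const_eq_top_of_ne_zero one_ne_zero
      have heq : (fun j : ℕ => ((fun ω' : ℕ → X => ω' j) ⁻¹' V).indicator
          (1 : (ℕ → X) → ℝ≥0∞) ω) = fun j : ℕ =>
          ({j : ℕ | ω j ∈ V}).indicator (1 : ℕ → ℝ≥0∞) j := by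
        funext j
        by_cases hj : ω j ∈ V
        · simp [indicator_of_mem, hj]
        · simp [indicator_of_notMem, hj]
      rw [heq, hinf]
    -- a.e. under PP, no "last visit" to V
    have hBad : PP {ω : ℕ → X | ∃ m, ω m ∈ V ∧ ∀ n > m, ω n ∉ V} = 0 := by
      refine le_antisymm ?_ zero_le
      calc PP {ω : ℕ → X | ∃ m, ω m ∈ V ∧ ∀ n > m, ω n ∉ V}
          ≤ (μ.bind P) {ω : ℕ → X | ∃ m, ω m ∈ V ∧ ∀ n > m, ω n ∉ V} := by
            have hBm : MeasurableSet {ω : ℕ → X | ∃ m, ω m ∈ V ∧ ∀ n > m, ω n ∉ V} := by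
              have hset : {ω : ℕ → X | ∃ m, ω m ∈ V ∧ ∀ n > m, ω n ∉ V}
                  = ⋃ m : ℕ, ((fun ω : ℕ → X => ω m) ⁻¹' V ∩
                    ⋂ k : ℕ, (fun ω : ℕ → X => ω (m + 1 + k)) ⁻¹' Vᶜ) := by
                ext ω
                simp only [mem_setOf_eq, mem_iUnion, mem_inter_iff, mem_preimage, mem_iInter,
                  mem_compl_iff]
                constructor
                · rintro ⟨m, hm, h⟩
                  exact ⟨m, hm, fun k => h (m + 1 + k) (by omega)⟩
                · rintro ⟨m, hm, h⟩
                  refine ⟨m, hm, fun n hn => ?_⟩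
                  obtain ⟨k, rfl⟩ : ∃ k, n = m + 1 + k := ⟨n - m - 1, by omega⟩
                  exact h k
              rw [hset]
              exact MeasurableSet.iUnion fun m => ((measurable_ev m) hV).inter
                (MeasurableSet.iInter fun k => (measurable_ev (m + 1 + k)) hV.compl)
            exact Measure.le_iff.mp hPPle _ hBm
        _ = 0 := rec_null hPmeas hPprob hP0 hPstep μ hinv hrecur hV
    -- combine: a.e. the path does not start in V
    have hstart : PP ((fun ω : ℕ → X => ω 0) ⁻¹' V) = 0 := by
      have hsub : (fun ω : ℕ → X => ω 0) ⁻¹' V ⊆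
          {ω : ℕ → X | {j : ℕ | ω j ∈ V}.Infinite} ∪
          {ω : ℕ → X | ∃ m, ω m ∈ V ∧ ∀ n > m, ω n ∉ V} := by
        intro ω hω0
        by_cases hinf : {j : ℕ | ω j ∈ V}.Infinite
        · exact Or.inl hinf
        · refine Or.inr ?_
          have hfin : {j : ℕ | ω j ∈ V}.Finite := not_infinite.mp hinf
          have hne : hfin.toFinset.Nonempty := by
            refine ⟨0, ?_⟩
            rw [Set.Finite.mem_toFinset]
            exact hω0
          refine ⟨hfin.toFinset.max' hne, ?_, ?_⟩
          · have := hfin.toFinset.max'_mem hne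
            rwa [Set.Finite.mem_toFinset] at this
          · intro n hn hnV
            have : n ∈ hfin.toFinset := by rw [Set.Finite.mem_toFinset]; exact hnV
            have := hfin.toFinset.le_max' n this
            omega
      refine measure_mono_null hsub ?_
      exact measure_union_null hIO hBad
    rw [hPPdef, ← Measure.map_apply (measurable_ev 0) hV, map_ev0 hPmeas hP0] at hstart
    exact hstart
  -- conclude
  have : etil P A μ univ = 0 := by
    rw [← hYun]
    refine le_antisymm (le_trans (measure_iUnion_le _) ?_) zero_le
    simp [hmain]
  ext W hW
  simpa using measure_mono_null (subset_univ W) this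

end Final

section SevPart

variable {B : Set X}

/-- event: first entrance (after time 1) happens at time `n`, with pre-entrance position in `B` -/
def SevN (A B : Set X) (n : ℕ) : Set (ℕ → X) :=
  {ω | ω 1 ∈ A ∧ (∀ j, 2 ≤ j → j < n → ¬(ω (j - 1) ∉ A ∧ ω j ∈ A)) ∧ ω (n - 1) ∈ B ∧ ω n ∈ A}

/-- event: no entrance after time 1 ever, starting in `B` and stepping into `A` -/
def SevInf (A B : Set X) : Set (ℕ → X) :=
  {ω | ω 1 ∈ A ∧ ω 0 ∈ B ∧ ∀ j, 2 ≤ j → ¬(ω (j - 1) ∉ A ∧ ω j ∈ A)}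

omit [MeasurableSpace X] in
lemma sevN_entr (hBA : B ⊆ Aᶜ) (k : ℕ) {ω : ℕ → X} (hω : ω ∈ SevN A B (k + 2)) :
    entrTime2 A ω = k + 2 := by
  obtain ⟨h1, hmid, hB', hA'⟩ := hω
  have hmem : k + 2 ∈ {j | 2 ≤ j ∧ ω (j - 1) ∉ A ∧ ω j ∈ A} := by
    exact ⟨by omega, by simpa using hBA hB', hA'⟩
  refine le_antisymm (Nat.sInf_le hmem) ?_
  by_contra hlt
  push_neg at hlt
  have hne : {j | 2 ≤ j ∧ ω (j - 1) ∉ A ∧ ω j ∈ A}.Nonempty := ⟨k + 2, hmem⟩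
  have hmem2 := Nat.sInf_mem hne
  exact hmid _ hmem2.1 hlt ⟨hmem2.2.1, hmem2.2.2⟩

omit [MeasurableSpace X] in
lemma sev_partition (hBA : B ⊆ Aᶜ) :
    {ω : ℕ → X | ω 1 ∈ A ∧ ω (entrTime2 A ω - 1) ∈ B}
      = SevInf A B ∪ ⋃ k : ℕ, SevN A B (k + 2) := by
  ext ω
  simp only [mem_setOf_eq, mem_union, mem_iUnion]
  constructor
  · rintro ⟨h1, hB'⟩
    by_cases hne : {j | 2 ≤ j ∧ ω (j - 1) ∉ A ∧ ω j ∈ A}.Nonempty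
    · right
      have hmem := Nat.sInf_mem hne
      have h2 : 2 ≤ sInf {j | 2 ≤ j ∧ ω (j - 1) ∉ A ∧ ω j ∈ A} := hmem.1
      refine ⟨sInf {j | 2 ≤ j ∧ ω (j - 1) ∉ A ∧ ω j ∈ A} - 2, ?_⟩
      have hn : sInf {j | 2 ≤ j ∧ ω (j - 1) ∉ A ∧ ω j ∈ A} - 2 + 2
          = sInf {j | 2 ≤ j ∧ ω (j - 1) ∉ A ∧ ω j ∈ A} := by omega
      rw [hn]
      refine ⟨h1, ?_, ?_, hmem.2.2⟩
      · intro j hj2 hjlt hbad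
        have : sInf {j | 2 ≤ j ∧ ω (j - 1) ∉ A ∧ ω j ∈ A} ≤ j :=
          Nat.sInf_le ⟨hj2, hbad.1, hbad.2⟩
        omega
      · exact hB'
    · left
      have hempty : {j | 2 ≤ j ∧ ω (j - 1) ∉ A ∧ ω j ∈ A} = ∅ :=
        not_nonempty_iff_eq_empty.mp hne
      have h0 : entrTime2 A ω = 0 := by
        rw [entrTime2, hempty, Nat.sInf_empty]
      rw [h0] at hB'
      refine ⟨h1, by simpa using hB', ?_⟩
      intro j hj2 hbad
      have : j ∈ {j | 2 ≤ j ∧ ω (j - 1) ∉ A ∧ ω j ∈ A} := ⟨hj2, hbad.1, hbad.2⟩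
      rw [hempty] at this
      exact this
  · rintro (⟨h1, h0, hall⟩ | ⟨k, hω⟩)
    · have hempty : {j | 2 ≤ j ∧ ω (j - 1) ∉ A ∧ ω j ∈ A} = ∅ := by
        rw [eq_empty_iff_forall_notMem]
        rintro j ⟨hj2, hbad1, hbad2⟩
        exact hall j hj2 ⟨hbad1, hbad2⟩
      have h0' : entrTime2 A ω = 0 := by
        rw [entrTime2, hempty, Nat.sInf_empty]
      rw [h0']
      exact ⟨h1, by simpa using h0⟩
    · have := sevN_entr hBA k hω
      rw [this]
      exact ⟨hω.1, by simpa using hω.2.2.1⟩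

omit [MeasurableSpace X] in
lemma sev_disjointN (hBA : B ⊆ Aᶜ) :
    Pairwise (Function.onFun Disjoint fun k : ℕ => SevN (X := X) A B (k + 2)) := by
  intro k k' hkk'
  refine Set.disjoint_left.mpr fun ω h1 h2 => ?_
  have e1 := sevN_entr hBA k h1
  have e2 := sevN_entr hBA k' h2
  omega

omit [MeasurableSpace X] in
lemma sev_disjointInf (hBA : B ⊆ Aᶜ) :
    Disjoint (SevInf (X := X) A B) (⋃ k : ℕ, SevN A B (k + 2)) := by
  refine Set.disjoint_left.mpr fun ω h1 h2 => ?_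
  obtain ⟨k, hk⟩ := mem_iUnion.mp h2
  obtain ⟨_, hmid, hB', hA'⟩ := hk
  exact h1.2.2 (k + 2) (by omega) ⟨by simpa using hBA hB', hA'⟩

lemma measurable_SevN (hA : MeasurableSet A) (hB : MeasurableSet B) (n : ℕ) :
    MeasurableSet (SevN (X := X) A B n) := by
  have hset : SevN (X := X) A B n = (fun ω : ℕ → X => ω 1) ⁻¹' A ∩
      ((⋂ j : ℕ, {ω : ℕ → X | 2 ≤ j → j < n → ¬(ω (j - 1) ∉ A ∧ ω j ∈ A)}) ∩
      ((fun ω : ℕ → X => ω (n - 1)) ⁻¹' B ∩ (fun ω : ℕ → X => ω n) ⁻¹' A)) := by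
    ext ω
    simp only [SevN, mem_setOf_eq, mem_inter_iff, mem_preimage, mem_iInter]
  rw [hset]
  refine ((measurable_ev 1) hA).inter (MeasurableSet.inter ?_
    (((measurable_ev (n - 1)) hB).inter ((measurable_ev n) hA)))
  refine MeasurableSet.iInter fun j => ?_
  by_cases h2 : 2 ≤ j
  · by_cases h3 : j < n
    · have : {ω : ℕ → X | 2 ≤ j → j < n → ¬(ω (j - 1) ∉ A ∧ ω j ∈ A)}
          = ((fun ω : ℕ → X => ω (j - 1)) ⁻¹' Aᶜ ∩ (fun ω : ℕ → X => ω j) ⁻¹' A)ᶜ := by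
        ext ω; simp [h2, h3]
      rw [this]
      exact (((measurable_ev (j - 1)) hA.compl).inter ((measurable_ev j) hA)).compl
    · have : {ω : ℕ → X | 2 ≤ j → j < n → ¬(ω (j - 1) ∉ A ∧ ω j ∈ A)} = univ := by
        ext ω; simp [h3]
      rw [this]; exact MeasurableSet.univ
  · have : {ω : ℕ → X | 2 ≤ j → j < n → ¬(ω (j - 1) ∉ A ∧ ω j ∈ A)} = univ := by
      ext ω; simp [h2]
    rw [this]; exact MeasurableSet.univ

lemma measurable_SevInf (hA : MeasurableSet A) (hB : MeasurableSet B) :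
    MeasurableSet (SevInf (X := X) A B) := by
  have hset : SevInf (X := X) A B = (fun ω : ℕ → X => ω 1) ⁻¹' A ∩
      ((fun ω : ℕ → X => ω 0) ⁻¹' B ∩
      (⋂ j : ℕ, {ω : ℕ → X | 2 ≤ j → ¬(ω (j - 1) ∉ A ∧ ω j ∈ A)})) := by
    ext ω
    simp only [SevInf, mem_setOf_eq, mem_inter_iff, mem_preimage, mem_iInter]
  rw [hset]
  refine ((measurable_ev 1) hA).inter (((measurable_ev 0) hB).inter
    (MeasurableSet.iInter fun j => ?_))
  by_cases h2 : 2 ≤ j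
  · have : {ω : ℕ → X | 2 ≤ j → ¬(ω (j - 1) ∉ A ∧ ω j ∈ A)}
        = ((fun ω : ℕ → X => ω (j - 1)) ⁻¹' Aᶜ ∩ (fun ω : ℕ → X => ω j) ⁻¹' A)ᶜ := by
      ext ω; simp [h2]
    rw [this]
    exact (((measurable_ev (j - 1)) hA.compl).inter ((measurable_ev j) hA)).compl
  · have : {ω : ℕ → X | 2 ≤ j → ¬(ω (j - 1) ∉ A ∧ ω j ∈ A)} = univ := by
      ext ω; simp [h2]
    rw [this]; exact MeasurableSet.univ

omit [MeasurableSpace X] in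
lemma sev_shift (k : ℕ) :
    SevN (X := X) A B (k + 2) = (fun ω : ℕ → X => ω 1) ⁻¹' A ∩
      sh ⁻¹' (Kev A k ∩ TailE A B k) := by
  ext ω
  simp only [SevN, Kev, TailE, mem_setOf_eq, mem_inter_iff, mem_preimage, sh]
  constructor
  · rintro ⟨h1, hmid, hB', hA'⟩
    refine ⟨h1, fun j hj => ?_, ?_, ?_⟩
    · intro hbad
      refine hmid (j + 2) (by omega) (by omega) ?_
      have : j + 2 - 1 = j + 1 := by omega
      rw [this]
      exact hbad
    · have : k + 2 - 1 = k + 1 := by omega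
      rwa [this] at hB'
    · exact hA'
  · rintro ⟨h1, hmid, hB', hA'⟩
    refine ⟨h1, fun j hj2 hjlt hbad => ?_, ?_, ?_⟩
    · have hj : j - 2 < k := by omega
      refine hmid (j - 2) hj ?_
      have e2 : j - 2 + 1 + 1 = j := by omega
      have e1 : j - 2 + 1 = j - 1 := by omega
      rw [e2, e1]
      exact hbad
    · have : k + 2 - 1 = k + 1 := by omega
      rw [this]
      exact hB'
    · exact hA'

end SevPart

omit [MeasurableSpace X] in
/-- unboundedness of visits given no last visit -/
lemma visits_unbounded {S : Set X} {ω : ℕ → X}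
    (h0 : ∃ j, ω j ∈ S)
    (hnb : ∀ m, ω m ∈ S → ∃ n > m, ω n ∈ S) :
    ∀ m, ∃ n > m, ω n ∈ S := by
  intro m
  induction m with
  | zero =>
      obtain ⟨j, hj⟩ := h0
      rcases Nat.eq_zero_or_pos j with rfl | hpos
      · exact hnb 0 hj
      · exact ⟨j, hpos, hj⟩
  | succ m ih =>
      obtain ⟨n, hn, hnS⟩ := ih
      rcases Nat.lt_or_ge (m + 1) n with h | h
      · exact ⟨n, h, hnS⟩
      · have : n = m + 1 := by omega
        subst this
        exact hnb (m + 1) hnS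

include hPmeas hPprob hP0 hPstep hA in
lemma sevInf_null (μ : Measure X)
    (hinv : Measure.map (fun ω => ω 1) (μ.bind P) = μ)
    (hrecur : ∀ B : Set X, MeasurableSet B → 0 < μ B →
      ((μ.restrict B).bind P) {ω | ∀ n, 1 ≤ n → ω n ∉ B} = 0)
    {B : Set X} (hB : MeasurableSet B) (hBA : B ⊆ Aᶜ) :
    (μ.bind P) (SevInf A B) = 0 := by
  have hbadB := rec_null hPmeas hPprob hP0 hPstep μ hinv hrecur hB
  have hbadA := rec_null hPmeas hPprob hP0 hPstep μ hinv hrecur hA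
  refine measure_mono_null ?_ (measure_union_null hbadB hbadA)
  intro ω hω
  obtain ⟨h1, h0, hall⟩ := hω
  by_contra hcon
  simp only [mem_union, mem_setOf_eq, not_or, not_exists, not_and, not_forall] at hcon
  obtain ⟨hnbB, hnbA⟩ := hcon
  -- B-visits and A-visits are unbounded
  have hBu : ∀ m, ∃ n > m, ω n ∈ B := by
    refine visits_unbounded ⟨0, h0⟩ fun m hm => ?_
    obtain ⟨n, hn, hn2⟩ := hnbB m hm
    exact ⟨n, hn, by simpa using hn2⟩
  have hAu : ∀ m, ∃ n > m, ω n ∈ A := by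
    refine visits_unbounded ⟨1, h1⟩ fun m hm => ?_
    obtain ⟨n, hn, hn2⟩ := hnbA m hm
    exact ⟨n, hn, by simpa using hn2⟩
  -- get an entrance after time 2
  obtain ⟨m₁, hm₁pos, hm₁B⟩ := hBu 0
  have hAne : {n | n > m₁ ∧ ω n ∈ A}.Nonempty := by
    obtain ⟨n, hn, hnA⟩ := hAu m₁
    exact ⟨n, hn, hnA⟩
  set n₀ := sInf {n | n > m₁ ∧ ω n ∈ A} with hn₀
  have hn₀mem := Nat.sInf_mem hAne
  have hn₀gt : n₀ > m₁ := hn₀mem.1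
  have hn₀A : ω n₀ ∈ A := hn₀mem.2
  have hpre : ω (n₀ - 1) ∉ A := by
    rcases Nat.eq_or_lt_of_le (Nat.succ_le_of_lt hn₀gt) with heq | hlt
    · have : n₀ - 1 = m₁ := by omega
      rw [this]
      simpa using hBA hm₁B
    · have hn1 : n₀ - 1 ∉ {n | n > m₁ ∧ ω n ∈ A} := Nat.notMem_of_lt_sInf (by omega)
      simp only [mem_setOf_eq, not_and] at hn1
      exact fun hc => (hn1 (by omega)) hc
  exact hall n₀ (by omega) ⟨hpre, hn₀A⟩

end WithMu

end Killed2

end P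

end Stmt11Aux

/-- Let `Y` be a Markov chain on a topological space `X` given by its family `P` of path-space
laws, recurrent starting under a σ-finite invariant Borel measure `μ`, and let `A` be Borel
with `P_{μ|_{Aᶜ}}(Y₁ ∈ A) > 0`. Then the measure `μ_{Aᶜ}^{exit}(dx) = P_x(Y₁ ∈ A) μ(dx)`
on `Aᶜ` is invariant for the exit chain `Y^{Aᶜ→}` (sampling `Y` at the last position in `Aᶜ`
before each entrance into `A`), whose transition from `x` is: make one step conditioned to
land in `A`, then run until the position preceding the next entrance into `A`. -/
theorem stmt11 {X : Type*} [TopologicalSpace X] [MeasurableSpace X] [BorelSpace X]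
    (P : X → Measure (ℕ → X)) (hPmeas : Measurable P)
    (hPprob : ∀ x, IsProbabilityMeasure (P x))
    (hP0 : ∀ x, (P x).map (fun ω => ω 0) = Measure.dirac x)
    (hPstep : ∀ x, (P x).map (fun ω n => ω (n + 1)) = ((P x).map (fun ω => ω 1)).bind P)
    (μ : Measure X) [SigmaFinite μ]
    (hinv : Measure.map (fun ω => ω 1) (μ.bind P) = μ)
    (hrecur : ∀ B : Set X, MeasurableSet B → 0 < μ B →
      ((μ.restrict B).bind P) {ω | ∀ n, 1 ≤ n → ω n ∉ B} = 0)
    (A : Set X) (hA : MeasurableSet A)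
    (μexit : Measure X)
    (hμexit : μexit = (μ.restrict Aᶜ).withDensity (fun x => (P x) {ω | ω 1 ∈ A}))
    (hpos : 0 < μexit Aᶜ) :
    ∀ B : Set X, MeasurableSet B → B ⊆ Aᶜ →
      μexit B =
        ∫⁻ x in Aᶜ, (P x) {ω | ω 1 ∈ A ∧ ω (entrTime2 A ω - 1) ∈ B} ∂μ := by
  intro B hB hBA
  classical
  open Stmt11Aux in
  have hSevInfMeas : MeasurableSet (SevInf A B) := measurable_SevInf hA hB
  have hSevNMeas : ∀ k : ℕ, MeasurableSet (SevN A B (k + 2)) :=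
    fun k => measurable_SevN hA hB (k + 2)
  have hPxSevInf : Measurable fun x => P x (SevInf A B) :=
    (Measure.measurable_coe hSevInfMeas).comp hPmeas
  have hPxSevN : ∀ k : ℕ, Measurable fun x => P x (SevN A B (k + 2)) :=
    fun k => (Measure.measurable_coe (hSevNMeas k)).comp hPmeas
  -- pointwise decomposition of the target event
  have hPx : ∀ x, P x {ω : ℕ → X | ω 1 ∈ A ∧ ω (entrTime2 A ω - 1) ∈ B}
      = P x (SevInf A B) + ∑' k : ℕ, P x (SevN A B (k + 2)) := by
    intro x
    rw [sev_partition hBA,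
      measure_union (sev_disjointInf hBA) (MeasurableSet.iUnion fun k => hSevNMeas k),
      measure_iUnion (sev_disjointN hBA) hSevNMeas]
  -- step 1: left side as a weighted integral
  have E1 : μexit B = ∫⁻ x in B, lam P x A ∂μ := by
    rw [hμexit, withDensity_apply _ hB, Measure.restrict_restrict hB,
      inter_eq_self_of_subset_left hBA]
    refine lintegral_congr fun x => ?_
    rw [lam, Measure.map_apply (measurable_ev 1) hA]
    rfl
  -- step 2: split μ into the non-swept part and the potential
  have E2 : ∫⁻ x in B, lam P x A ∂μ
      = ∫⁻ x in B, lam P x A ∂(etaM P A μ) + ∫⁻ x in B, lam P x A ∂(GM P A μ) := by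
    conv_lhs => rw [← etaM_add_GM hPmeas hA μ hinv]
    rw [Measure.restrict_add, lintegral_add_measure]
  -- step 3: the non-swept part contributes nothing
  have E3 : ∫⁻ x in B, lam P x A ∂(etaM P A μ) = 0 := by
    have h1 : ∫⁻ x in B, lam P x A ∂(etaM P A μ)
        ≤ ∫⁻ x in Aᶜ, lam P x A ∂(etaM P A μ) :=
      lintegral_mono' (Measure.restrict_mono hBA (le_refl _)) (le_refl _)
    have h2 : ∫⁻ x in Aᶜ, lam P x A ∂(etaM P A μ) = etil P A μ univ := by
      rw [etil, Measure.bind_apply MeasurableSet.univ (measurable_lamr hPmeas hA).aemeasurable]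
      refine (lintegral_congr fun x => ?_).symm
      rw [lamr, Measure.restrict_apply_univ]
    rw [etil_zero hPmeas hPprob hP0 hPstep hA μ hinv hrecur] at h2
    simp only [Measure.coe_zero, Pi.zero_apply] at h2
    exact le_antisymm (le_trans h1 (le_of_eq h2)) zero_le
  -- step 4: expand the potential as a sum
  have E4 : ∫⁻ x in B, lam P x A ∂(GM P A μ)
      = ∑' k : ℕ, ∫⁻ x in B, lam P x A ∂(ek P A μ k) := by
    rw [GM, Measure.restrict_sum _ hB, lintegral_sum_measure]
  -- step 5: identify each term with a piece of the right-hand side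
  have E5 : ∀ k : ℕ, ∫⁻ x in B, lam P x A ∂(ek P A μ k)
      = ∫⁻ x in Aᶜ, P x (SevN A B (k + 2)) ∂μ := by
    intro k
    have h1 := KLB hPmeas hPprob hP0 hPstep hA hB k (eM P A μ)
    have h2 := RS_reduce hPmeas hPprob hP0 hPstep hA μ
      ((measurable_Kev hA k).inter (measurable_TailE hA hB k))
    rw [ek, ← h1, ← h2]
    refine lintegral_congr fun x => ?_
    rw [sev_shift]
  -- step 6: the no-return part of the right-hand side vanishes
  have E6 : ∫⁻ x in Aᶜ, P x (SevInf A B) ∂μ = 0 := by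
    have h1 : ∫⁻ x in Aᶜ, P x (SevInf A B) ∂μ ≤ ∫⁻ x, P x (SevInf A B) ∂μ :=
      lintegral_mono' Measure.restrict_le_self (le_refl _)
    have h2 : ∫⁻ x, P x (SevInf A B) ∂μ = (μ.bind P) (SevInf A B) :=
      (Measure.bind_apply hSevInfMeas hPmeas.aemeasurable).symm
    rw [h2, sevInf_null hPmeas hPprob hP0 hPstep hA μ hinv hrecur hB hBA] at h1
    exact le_antisymm h1 zero_le
  -- assemble
  calc μexit B = ∫⁻ x in B, lam P x A ∂μ := E1
    _ = ∫⁻ x in B, lam P x A ∂(etaM P A μ) + ∫⁻ x in B, lam P x A ∂(GM P A μ) := E2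
    _ = ∫⁻ x in B, lam P x A ∂(GM P A μ) := by rw [E3, zero_add]
    _ = ∑' k : ℕ, ∫⁻ x in B, lam P x A ∂(ek P A μ k) := E4
    _ = ∑' k : ℕ, ∫⁻ x in Aᶜ, P x (SevN A B (k + 2)) ∂μ := by
        exact tsum_congr fun k => E5 k
    _ = ∫⁻ x in Aᶜ, P x (SevInf A B) ∂μ
        + ∑' k : ℕ, ∫⁻ x in Aᶜ, P x (SevN A B (k + 2)) ∂μ := by rw [E6, zero_add]
    _ = ∫⁻ x in Aᶜ, (P x (SevInf A B) + ∑' k : ℕ, P x (SevN A B (k + 2))) ∂μ := by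
        rw [lintegral_add_left hPxSevInf,
          lintegral_tsum fun k => (hPxSevN k).aemeasurable]
    _ = ∫⁻ x in Aᶜ, (P x) {ω : ℕ → X | ω 1 ∈ A ∧ ω (entrTime2 A ω - 1) ∈ B} ∂μ := by
        refine lintegral_congr fun x => ?_
        rw [hPx]
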